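/- arXiv:2104.01977 — 4 statements merged into one kernel-verified Lean document; each statement's English description precedes it below -/
import Mathlib

section
/- Under the location-scale model with likelihood f(x|μ,τ) = (2π)^{-n/2} τ^{-n} det(U)^{-1/2} exp(-(x-μ1)ᵀU⁻¹(x-μ1)/(2τ²)) and improper prior π(μ,τ) ∝ 1/τ, if n > 2 and x is not a multiple of the all-ones vector, the marginal density m(x) = ∫₀^∞ ∫_{-∞}^∞ f(x|μ,τ)·(1/τ) dμ dτ equals Γ((n-1)/2)·(xᵀQx)^{-(n-1)/2} / (det(U)^{1/2} · 2π^{(n-1)/2} · √(1ᵀU⁻¹1)), where Q = U⁻¹ - (U⁻¹1 1ᵀU⁻¹)/(1ᵀU⁻¹1). -/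
open Matrix Real MeasureTheory

theorem sym_aux {n : ℕ} {A : Matrix (Fin n) (Fin n) ℝ} (hA : A.IsHermitian)
    (u v : Fin n → ℝ) : u ⬝ᵥ A *ᵥ v = v ⬝ᵥ A *ᵥ u := by
  have h : Aᵀ = A := by
    have := hA.eq
    rwa [conjTranspose_eq_transpose_of_trivial] at this
  rw [dotProduct_mulVec, ← mulVec_transpose, h, dotProduct_comm]

theorem expand_aux {n : ℕ} {A : Matrix (Fin n) (Fin n) ℝ} (hA : A.IsHermitian)
    (x : Fin n → ℝ) (t : ℝ) :
    (x - t • (fun _ => 1 : Fin n → ℝ)) ⬝ᵥ A *ᵥ (x - t • (fun _ => 1 : Fin n → ℝ)) =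
      x ⬝ᵥ A *ᵥ x - 2 * t * ((fun _ => 1 : Fin n → ℝ) ⬝ᵥ A *ᵥ x)
        + t ^ 2 * ((fun _ => 1 : Fin n → ℝ) ⬝ᵥ A *ᵥ (fun _ => 1 : Fin n → ℝ)) := by
  simp only [sub_dotProduct, mulVec_sub, dotProduct_sub, smul_dotProduct, dotProduct_smul,
    mulVec_smul, smul_eq_mul]
  rw [sym_aux hA x ((fun _ => 1 : Fin n → ℝ))]
  ring

theorem vmv_aux {n : ℕ} (u v x : Fin n → ℝ) :
    x ⬝ᵥ (vecMulVec u v *ᵥ x) = (u ⬝ᵥ x) * (v ⬝ᵥ x) := by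
  simp only [dotProduct, mulVec, vecMulVec_apply]
  rw [Finset.sum_mul]
  refine Finset.sum_congr rfl fun i _ => ?_
  rw [Finset.mul_sum, Finset.mul_sum]
  exact Finset.sum_congr rfl fun j _ => by ring

theorem gauss_shift (k m : ℝ) :
    (∫ μ : ℝ, Real.exp (-(k * (μ - m) ^ 2))) = Real.sqrt (π / k) := by
  have h1 : (∫ μ : ℝ, Real.exp (-(k * (μ - m) ^ 2)))
      = ∫ μ : ℝ, Real.exp (-(k * μ ^ 2)) :=
    integral_sub_right_eq_self (fun μ : ℝ => Real.exp (-(k * μ ^ 2))) m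
  rw [h1]
  simpa [neg_mul] using integral_gaussian k

theorem stmt5 {n : ℕ} (hn : 2 < n) (U : Matrix (Fin n) (Fin n) ℝ) (hU : U.PosDef)
    (x : Fin n → ℝ) (hx : ¬∃ a : ℝ, x = a • (fun _ => 1 : Fin n → ℝ)) :
    (∫ τ in Set.Ioi (0 : ℝ), ∫ μ : ℝ,
        (2 * π) ^ (-(n : ℝ) / 2) * τ ^ (-(n : ℝ)) * (U.det) ^ (-(1 : ℝ) / 2) *
          Real.exp (-((x - μ • (fun _ => 1 : Fin n → ℝ)) ⬝ᵥ
              (U⁻¹ *ᵥ (x - μ • (fun _ => 1 : Fin n → ℝ)))) / (2 * τ ^ 2)) * (1 / τ)) =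
      Real.Gamma (((n : ℝ) - 1) / 2) *
          (x ⬝ᵥ ((U⁻¹ -
              ((fun _ => 1 : Fin n → ℝ) ⬝ᵥ (U⁻¹ *ᵥ (fun _ => 1 : Fin n → ℝ)))⁻¹ •
                vecMulVec (U⁻¹ *ᵥ (fun _ => 1 : Fin n → ℝ))
                  (U⁻¹ *ᵥ (fun _ => 1 : Fin n → ℝ))) *ᵥ x)) ^ (-((n : ℝ) - 1) / 2) /
        (Real.sqrt U.det * (2 * π ^ (((n : ℝ) - 1) / 2)) *
          Real.sqrt ((fun _ => 1 : Fin n → ℝ) ⬝ᵥ (U⁻¹ *ᵥ (fun _ => 1 : Fin n → ℝ)))) := by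
  have hA : (U⁻¹).PosDef := hU.inv
  set A := U⁻¹ with hAdef
  set e : Fin n → ℝ := (fun _ => 1) with hedef
  set s : ℝ := e ⬝ᵥ A *ᵥ e with hsdef
  set b : ℝ := e ⬝ᵥ A *ᵥ x with hbdef
  set q : ℝ := x ⬝ᵥ A *ᵥ x with hqdef
  have he : e ≠ 0 := by
    intro h
    have := congrFun h ⟨0, by omega⟩
    norm_num [hedef] at this
  have hs : 0 < s := by simpa [hsdef] using hA.dotProduct_mulVec_pos he
  have hdet : 0 < U.det := hU.det_pos
  set c : ℝ := q - s⁻¹ * b ^ 2 with hcdef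
  have hc : 0 < c := by
    have hv : x - (s⁻¹ * b) • e ≠ 0 := by
      intro h
      exact hx ⟨s⁻¹ * b, by rwa [sub_eq_zero] at h⟩
    have h0 := hA.dotProduct_mulVec_pos hv
    simp only [star_trivial] at h0
    rw [expand_aux hA.1 x (s⁻¹ * b)] at h0
    rw [hcdef]
    have hs' : s ≠ 0 := hs.ne'
    calc (0:ℝ) < q - 2 * (s⁻¹ * b) * b + (s⁻¹ * b) ^ 2 * s := h0
      _ = q - s⁻¹ * b ^ 2 := by field_simp; ring
  have hQ : x ⬝ᵥ ((A - s⁻¹ • vecMulVec (A *ᵥ e) (A *ᵥ e)) *ᵥ x) = c := by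
    have h1 : (A *ᵥ e) ⬝ᵥ x = b := by
      rw [dotProduct_comm, sym_aux hA.1 x e]
    rw [sub_mulVec, dotProduct_sub, smul_mulVec, dotProduct_smul, smul_eq_mul,
      vmv_aux, h1, hcdef]
    ring
  rw [hQ]
  set e2 : ℝ := ((n : ℝ) - 1) / 2 with he2def
  set d : ℝ := (U.det) ^ (-(1 : ℝ) / 2) with hddef
  set K : ℝ := (2 * π) ^ (-e2) * d * (Real.sqrt s)⁻¹ with hKdef
  set g : ℝ → ℝ := fun t => t ^ ((n : ℝ) - 2) * Real.exp (-(c / 2) * t ^ (2 : ℝ)) with hgdef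
  have hπ : (0:ℝ) < 2 * π := by positivity
  have hinner : ∀ τ ∈ Set.Ioi (0:ℝ),
      (∫ μ : ℝ,
        (2 * π) ^ (-(n : ℝ) / 2) * τ ^ (-(n : ℝ)) * d *
          Real.exp (-((x - μ • e) ⬝ᵥ (A *ᵥ (x - μ • e))) / (2 * τ ^ 2)) * (1 / τ))
      = K * ((|(-1 : ℝ)| * τ ^ ((-1 : ℝ) - 1)) • g (τ ^ (-1 : ℝ))) := by
    intro τ hτ
    rw [Set.mem_Ioi] at hτ
    have hτ0 : τ ≠ 0 := hτ.ne'
    have hexp : ∀ μ : ℝ,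
        Real.exp (-((x - μ • e) ⬝ᵥ (A *ᵥ (x - μ • e))) / (2 * τ ^ 2))
        = Real.exp (-(c / (2 * τ ^ 2))) *
            Real.exp (-(s / (2 * τ ^ 2) * (μ - s⁻¹ * b) ^ 2)) := by
      intro μ
      rw [← Real.exp_add]
      congr 1
      rw [expand_aux hA.1 x μ, ← hsdef, ← hbdef, ← hqdef, hcdef]
      field_simp
      ring
    simp_rw [hexp, show ∀ μ : ℝ,
        (2 * π) ^ (-(n : ℝ) / 2) * τ ^ (-(n : ℝ)) * d *
          (Real.exp (-(c / (2 * τ ^ 2))) *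
            Real.exp (-(s / (2 * τ ^ 2) * (μ - s⁻¹ * b) ^ 2))) * (1 / τ)
        = ((2 * π) ^ (-(n : ℝ) / 2) * τ ^ (-(n : ℝ)) * d * Real.exp (-(c / (2 * τ ^ 2))) * (1 / τ))
            * Real.exp (-(s / (2 * τ ^ 2) * (μ - s⁻¹ * b) ^ 2)) from fun μ => by ring]
    rw [integral_const_mul, gauss_shift (s / (2 * τ ^ 2)) (s⁻¹ * b)]
    -- now pure algebra
    have h7 : Real.sqrt (π / (s / (2 * τ ^ 2))) = Real.sqrt (2 * π) * τ / Real.sqrt s := by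
      rw [show π / (s / (2 * τ ^ 2)) = (2 * π) * τ ^ 2 / s by field_simp,
        Real.sqrt_div (by positivity), Real.sqrt_mul (by positivity),
        Real.sqrt_sq hτ.le]
    rw [h7, hKdef, hgdef]
    have habs : |(-1:ℝ)| = (1:ℝ) := by norm_num
    have hτinv : τ ^ ((-1:ℝ)) = τ⁻¹ := Real.rpow_neg_one τ
    have hm2 : τ ^ ((-1:ℝ) - 1) = (τ ^ 2)⁻¹ := by
      rw [show (-1:ℝ) - 1 = -((2:ℕ):ℝ) by norm_num, Real.rpow_neg hτ.le, Real.rpow_natCast]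
    have h3 : (τ⁻¹) ^ ((n:ℝ) - 2) = (τ ^ ((n:ℝ) - 2))⁻¹ := Real.inv_rpow hτ.le _
    have h4 : (τ⁻¹) ^ ((2:ℝ)) = (τ ^ 2)⁻¹ := by
      rw [Real.inv_rpow hτ.le, show ((2:ℝ)) = ((2:ℕ):ℝ) by norm_num, Real.rpow_natCast]
    have h5 : τ ^ (-(n:ℝ)) = (τ ^ ((n:ℝ) - 2))⁻¹ * (τ ^ 2)⁻¹ := by
      rw [← mul_inv, ← Real.rpow_natCast τ 2, ← Real.rpow_add hτ, Real.rpow_neg hτ.le]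
      norm_num
    have h8 : (2 * π) ^ (-(n : ℝ) / 2) * Real.sqrt (2 * π) = (2 * π) ^ (-e2) := by
      rw [Real.sqrt_eq_rpow, ← Real.rpow_add hπ, he2def]
      congr 1
      ring
    have h6 : -(c / 2) * (τ ^ 2)⁻¹ = -(c / (2 * τ ^ 2)) := by
      field_simp
    simp only [smul_eq_mul]
    rw [habs, hτinv, hm2, h3, h4, h5, h6, ← h8]
    have hX := Real.exp_ne_zero (-(c / (2 * τ ^ 2)))
    field_simp
  rw [setIntegral_congr_fun measurableSet_Ioi hinner, integral_const_mul,
    integral_comp_rpow_Ioi g (show (-1:ℝ) ≠ 0 by norm_num), hgdef]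
  rw [integral_rpow_mul_exp_neg_mul_rpow (by norm_num : (0:ℝ) < 2)
    (by have h2n : (2:ℝ) < n := (by exact_mod_cast hn); linarith : (-1:ℝ) < (n:ℝ) - 2) (by positivity : (0:ℝ) < c / 2)]
  -- final algebra
  have hne1 : ((n:ℝ) - 2 + 1) = (n:ℝ) - 1 := by ring
  rw [hne1, show -((n:ℝ) - 1) / 2 = -e2 by rw [he2def]; ring,
    show ((n:ℝ) - 1) / 2 = e2 from he2def.symm]
  have hcd : (c / 2) ^ (-e2) = c ^ (-e2) * (2:ℝ) ^ e2 := by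
    rw [Real.div_rpow hc.le (by norm_num), Real.rpow_neg (by norm_num : (0:ℝ) ≤ 2)]
    field_simp
  have h2p : (2 * π) ^ (-e2) = ((2:ℝ) ^ e2)⁻¹ * (π ^ e2)⁻¹ := by
    rw [Real.mul_rpow (by norm_num) pi_pos.le, Real.rpow_neg (by norm_num : (0:ℝ) ≤ 2),
      Real.rpow_neg pi_pos.le]
  have hdd : d = (Real.sqrt U.det)⁻¹ := by
    rw [hddef, show -(1:ℝ) / 2 = -(1 / 2 : ℝ) by norm_num, Real.rpow_neg hdet.le,
      ← Real.sqrt_eq_rpow]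
  rw [hKdef, hcd, h2p, hdd]
  have h2e : ((2:ℝ) ^ e2) ≠ 0 := by positivity
  have hpe : (π ^ e2 : ℝ) ≠ 0 := by positivity
  have hsd : Real.sqrt U.det ≠ 0 := by positivity
  have hss : Real.sqrt s ≠ 0 := by positivity
  field_simp
end

section
/- Under the location-scale model with n = 2 observations, positive definite 2×2 matrix U_ℓ and improper prior π(μ,τ) ∝ 1/τ, the marginal density of x_ℓ ∈ R² equals 1 / (2·√(det(U_ℓ) · (x_ℓᵀQ_ℓx_ℓ) · (1₂ᵀU_ℓ⁻¹1₂))), where Q_ℓ = U_ℓ⁻¹ - (U_ℓ⁻¹1₂1₂ᵀU_ℓ⁻¹)/(1₂ᵀU_ℓ⁻¹1₂) and 1₂ = (1,1)ᵀ, provided the two components of x_ℓ are not equal. -/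
open Matrix Real MeasureTheory

lemma stmt6_inner_int (a b c τ : ℝ) (ha : 0 < a) (hτ : 0 < τ) :
    ∫ μ : ℝ, Real.exp (-(a*μ^2 - 2*b*μ + c) / (2*τ^2)) =
      τ * Real.sqrt (2*π/a) * Real.exp (-(c - b^2/a) / (2*τ^2)) := by
  have h1 : ∀ μ : ℝ, -(a*μ^2 - 2*b*μ + c)/(2*τ^2)
      = -(a/(2*τ^2)) * (μ - b/a)^2 + (-(c - b^2/a)/(2*τ^2)) := by
    intro μ; field_simp; ring
  calc ∫ μ : ℝ, Real.exp (-(a*μ^2 - 2*b*μ + c) / (2*τ^2))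
      = ∫ μ : ℝ, Real.exp (-(a/(2*τ^2)) * (μ - b/a)^2) * Real.exp (-(c - b^2/a)/(2*τ^2)) := by
        simp only [h1, Real.exp_add]
    _ = (∫ μ : ℝ, Real.exp (-(a/(2*τ^2)) * (μ - b/a)^2)) * Real.exp (-(c - b^2/a)/(2*τ^2)) :=
        integral_mul_const _ _
    _ = Real.sqrt (π/(a/(2*τ^2))) * Real.exp (-(c - b^2/a)/(2*τ^2)) := by
        rw [show (fun μ : ℝ => Real.exp (-(a/(2*τ^2)) * (μ - b/a)^2))
            = fun μ : ℝ => (fun t : ℝ => Real.exp (-(a/(2*τ^2)) * t^2)) (μ - b/a) from rfl,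
          integral_sub_right_eq_self (fun t : ℝ => Real.exp (-(a/(2*τ^2)) * t^2)) (b/a),
          integral_gaussian]
    _ = τ * Real.sqrt (2*π/a) * Real.exp (-(c - b^2/a)/(2*τ^2)) := by
        rw [show π/(a/(2*τ^2)) = (2*π/a)*τ^2 by field_simp,
          Real.sqrt_mul (by positivity), Real.sqrt_sq hτ.le]; ring

lemma stmt6_outer_int (k : ℝ) (hk : 0 < k) :
    ∫ τ in Set.Ioi (0:ℝ), τ ^ (-(2:ℝ)) * Real.exp (-k / (2*τ^2)) = Real.sqrt (2*π/k) / 2 := by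
  have h := integral_comp_rpow_Ioi (fun y : ℝ => Real.exp (-(k/2) * y^2)) (p := (-1:ℝ)) (by norm_num)
  rw [integral_gaussian_Ioi] at h
  calc ∫ τ in Set.Ioi (0:ℝ), τ ^ (-(2:ℝ)) * Real.exp (-k / (2*τ^2))
      = ∫ τ in Set.Ioi (0:ℝ), (|(-1:ℝ)| * τ ^ ((-1:ℝ)-1)) • Real.exp (-(k/2) * (τ ^ (-1:ℝ))^2) := by
        refine setIntegral_congr_fun measurableSet_Ioi (fun τ hτ => ?_)
        have hτ' : (0:ℝ) < τ := hτ
        rw [Real.rpow_neg_one, smul_eq_mul]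
        norm_num
        left
        field_simp
    _ = Real.sqrt (π/(k/2)) / 2 := h
    _ = Real.sqrt (2*π/k) / 2 := by rw [show π/(k/2) = 2*π/k by field_simp]

lemma stmt6_final (D a k : ℝ) (hD : 0 < D) (ha : 0 < a) (hk : 0 < k) :
    (2 * π)⁻¹ * (Real.sqrt D)⁻¹ * Real.sqrt (2 * π / a) * (Real.sqrt (2 * π / k) / 2)
      = 1 / (2 * (Real.sqrt D * Real.sqrt k * Real.sqrt a)) := by
  have hπ : 0 < π := Real.pi_pos
  rw [Real.sqrt_div (by positivity : (0:ℝ) ≤ 2*π), Real.sqrt_div (by positivity : (0:ℝ) ≤ 2*π)]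
  have h1 : Real.sqrt D ≠ 0 := by positivity
  have h2 : Real.sqrt a ≠ 0 := by positivity
  have h3 : Real.sqrt k ≠ 0 := by positivity
  have hπ' : π ≠ 0 := ne_of_gt hπ
  field_simp
  have e : Real.sqrt 2 ^2 * Real.sqrt π ^2 = Real.sqrt (2*π) ^2 := by
    rw [Real.sq_sqrt (by norm_num : (0:ℝ) ≤ 2), Real.sq_sqrt hπ.le,
      Real.sq_sqrt (by positivity : (0:ℝ) ≤ 2*π)]
  have e2 : Real.sqrt (2*π) ^2 = 2*π := Real.sq_sqrt (by positivity)
  linear_combination e2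

theorem stmt6 (U : Matrix (Fin 2) (Fin 2) ℝ) (hU : U.PosDef)
    (x : Fin 2 → ℝ) (hx : x 0 ≠ x 1) :
    (∫ τ in Set.Ioi (0 : ℝ), ∫ μ : ℝ,
        (2 * π)⁻¹ * τ ^ (-(2 : ℝ)) * (U.det) ^ (-(1 : ℝ) / 2) *
          Real.exp (-((x - μ • (fun _ => 1 : Fin 2 → ℝ)) ⬝ᵥ
              (U⁻¹ *ᵥ (x - μ • (fun _ => 1 : Fin 2 → ℝ)))) / (2 * τ ^ 2)) * (1 / τ)) =
      1 / (2 * Real.sqrt (U.det *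
          (x ⬝ᵥ ((U⁻¹ -
              ((fun _ => 1 : Fin 2 → ℝ) ⬝ᵥ (U⁻¹ *ᵥ (fun _ => 1 : Fin 2 → ℝ)))⁻¹ •
                vecMulVec (U⁻¹ *ᵥ (fun _ => 1 : Fin 2 → ℝ))
                  (U⁻¹ *ᵥ (fun _ => 1 : Fin 2 → ℝ))) *ᵥ x)) *
          ((fun _ => 1 : Fin 2 → ℝ) ⬝ᵥ (U⁻¹ *ᵥ (fun _ => 1 : Fin 2 → ℝ))))) := by
  have hvsym : (U⁻¹)ᵀ = U⁻¹ := by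
    rw [Matrix.transpose_nonsing_inv]; congr 1
    simpa [Matrix.IsHermitian] using hU.1
  have hs : U⁻¹ 0 1 = U⁻¹ 1 0 := by
    conv_lhs => rw [← hvsym]
    rfl
  have hvpd : (U⁻¹).PosDef := hU.inv
  have hd : 0 < U.det := hU.det_pos
  set o : Fin 2 → ℝ := (fun _ => 1) with ho
  set a := o ⬝ᵥ (U⁻¹ *ᵥ o) with hadef
  set b := x ⬝ᵥ (U⁻¹ *ᵥ o) with hbdef
  set c := x ⬝ᵥ (U⁻¹ *ᵥ x) with hcdef
  have ha : 0 < a := by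
    have h0 : o ≠ 0 := by
      intro h; have := congrFun h 0; simp [ho] at this
    have := hvpd.dotProduct_mulVec_pos h0
    simpa [hadef] using this
  have ha' : a ≠ 0 := ne_of_gt ha
  have hquad : ∀ μ : ℝ, (x - μ • o) ⬝ᵥ (U⁻¹ *ᵥ (x - μ • o)) = a*μ^2 - 2*b*μ + c := by
    intro μ
    simp only [hadef, hbdef, hcdef, ho, dotProduct, mulVec, Fin.sum_univ_two,
      Pi.sub_apply, Pi.smul_apply, smul_eq_mul]
    rw [hs]; ring
  have hk : 0 < c - b^2/a := by
    have hy : x - (b/a) • o ≠ 0 := by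
      intro h
      have h0 := congrFun h 0
      have h1 := congrFun h 1
      simp [ho, sub_eq_zero] at h0 h1
      exact hx (h0.trans h1.symm)
    have := hvpd.dotProduct_mulVec_pos hy
    have h2 : 0 < (x - (b/a) • o) ⬝ᵥ (U⁻¹ *ᵥ (x - (b/a) • o)) := by simpa using this
    rw [hquad (b/a)] at h2
    have h3 : a*(b/a)^2 - 2*b*(b/a) + c = c - b^2/a := by field_simp; ring
    linarith [h3 ▸ h2]
  have hrhs : x ⬝ᵥ ((U⁻¹ - a⁻¹ • vecMulVec (U⁻¹ *ᵥ o) (U⁻¹ *ᵥ o)) *ᵥ x) = c - b^2/a := by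
    simp only [hadef, hbdef, hcdef, ho, dotProduct, mulVec, Fin.sum_univ_two,
      Matrix.sub_apply, Matrix.smul_apply, vecMulVec_apply, smul_eq_mul]
    field_simp
    ring
  rw [hrhs]
  set k := c - b^2/a with hkdef
  set C : ℝ := (2*π)⁻¹ * (U.det) ^ (-(1:ℝ)/2) * Real.sqrt (2*π/a) with hC
  calc (∫ τ in Set.Ioi (0 : ℝ), ∫ μ : ℝ,
        (2 * π)⁻¹ * τ ^ (-(2 : ℝ)) * (U.det) ^ (-(1 : ℝ) / 2) *
          Real.exp (-((x - μ • o) ⬝ᵥ (U⁻¹ *ᵥ (x - μ • o))) / (2 * τ ^ 2)) * (1 / τ))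
      = ∫ τ in Set.Ioi (0:ℝ), C * (τ ^ (-(2:ℝ)) * Real.exp (-k / (2*τ^2))) := by
        refine setIntegral_congr_fun measurableSet_Ioi (fun τ hτ => ?_)
        have hτ : (0:ℝ) < τ := hτ
        simp only [hquad]
        rw [show (fun μ : ℝ => (2 * π)⁻¹ * τ ^ (-(2 : ℝ)) * (U.det) ^ (-(1 : ℝ) / 2) *
              Real.exp (-(a*μ^2 - 2*b*μ + c) / (2 * τ ^ 2)) * (1 / τ))
            = fun μ : ℝ => ((2 * π)⁻¹ * τ ^ (-(2 : ℝ)) * (U.det) ^ (-(1 : ℝ) / 2) * (1/τ)) *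
              Real.exp (-(a*μ^2 - 2*b*μ + c) / (2 * τ ^ 2)) from funext (fun μ => by ring),
          integral_const_mul, stmt6_inner_int a b c τ ha hτ, ← hkdef]
        rw [hC]
        field_simp
    _ = C * ∫ τ in Set.Ioi (0:ℝ), τ ^ (-(2:ℝ)) * Real.exp (-k / (2*τ^2)) :=
        integral_const_mul _ _
    _ = C * (Real.sqrt (2*π/k) / 2) := by rw [stmt6_outer_int k hk]
    _ = 1 / (2 * Real.sqrt (U.det * k * a)) := by
        rw [hC]
        have hdet : (U.det) ^ (-(1:ℝ)/2) = (Real.sqrt U.det)⁻¹ := by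
          rw [show -(1:ℝ)/2 = -(1/2 : ℝ) by norm_num, Real.rpow_neg hd.le,
            ← Real.sqrt_eq_rpow]
        rw [hdet, Real.sqrt_mul (by positivity : (0:ℝ) ≤ U.det * k), Real.sqrt_mul hd.le]
        exact stmt6_final U.det a k hd ha hk
end

section
/- For the random effects reference prior π(τ) = √(τ² · tr((U + τ²I)⁻²)) with U symmetric positive definite, π is continuous on (0,∞), satisfies π(τ) → 0 as τ → 0⁺, and π(τ) ~ √n / τ as τ → ∞ (i.e., τ·π(τ) → √n). -/
open Matrix Real Filter

lemma aux_psd {n : ℕ} {c : ℝ} (hc : 0 ≤ c) :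
    ((c • (1 : Matrix (Fin n) (Fin n) ℝ))).PosSemidef := by
  constructor
  · simp [Matrix.IsHermitian]
  · intro x
    exact (Matrix.PosSemidef.one.smul hc).2 x

lemma aux_pd {n : ℕ} (U : Matrix (Fin n) (Fin n) ℝ) (hU : U.PosDef) (τ : ℝ) :
    (U + τ ^ 2 • (1 : Matrix (Fin n) (Fin n) ℝ)).PosDef :=
  hU.add_posSemidef (aux_psd (sq_nonneg τ))

lemma aux_psd_smul {n : ℕ} {s : ℝ} (hs : 0 ≤ s) (U : Matrix (Fin n) (Fin n) ℝ)
    (hU : U.PosSemidef) : (s • U).PosSemidef := by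
  constructor
  · show (s • U)ᴴ = s • U
    rw [Matrix.conjTranspose_smul, hU.1]
    simp
  · intro x
    exact (hU.smul hs).2 x

lemma aux_pd' {n : ℕ} (U : Matrix (Fin n) (Fin n) ℝ) (hU : U.PosDef) {s : ℝ} (hs : 0 ≤ s) :
    (s • U + (1 : Matrix (Fin n) (Fin n) ℝ)).PosDef :=
  Matrix.PosDef.posSemidef_add (aux_psd_smul hs U hU.posSemidef) Matrix.PosDef.one

set_option maxHeartbeats 1000000 in
theorem stmt12 {n : ℕ} (hn : 0 < n) (U : Matrix (Fin n) (Fin n) ℝ) (hU : U.PosDef) :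
    let prior : ℝ → ℝ := fun τ =>
      Real.sqrt (τ ^ 2 * (((U + τ ^ 2 • (1 : Matrix (Fin n) (Fin n) ℝ))⁻¹ *
        (U + τ ^ 2 • (1 : Matrix (Fin n) (Fin n) ℝ))⁻¹).trace))
    ContinuousOn prior (Set.Ioi 0) ∧
    Tendsto prior (nhdsWithin 0 (Set.Ioi 0)) (nhds 0) ∧
    Tendsto (fun τ => τ * prior τ) atTop (nhds (Real.sqrt n)) := by
  intro prior
  set A : ℝ → Matrix (Fin n) (Fin n) ℝ := fun τ => U + τ ^ 2 • 1 with hAdef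
  have hAcont : Continuous A :=
    continuous_const.add ((continuous_pow 2).smul continuous_const)
  have hAdet : ∀ τ, (A τ).det ≠ 0 := fun τ => (aux_pd U hU τ).det_pos.ne'
  have hAinv : Continuous fun τ => (A τ)⁻¹ := by
    have h1 : Continuous fun τ => ((A τ).det)⁻¹ := (hAcont.matrix_det).inv₀ hAdet
    have h2 : Continuous fun τ => ((A τ).det)⁻¹ • (A τ).adjugate :=
      h1.smul hAcont.matrix_adjugate
    convert h2 using 1
    funext τ
    rw [Matrix.inv_def, Ring.inverse_eq_inv]
  have hT : Continuous fun τ => ((A τ)⁻¹ * (A τ)⁻¹).trace :=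
    (hAinv.mul hAinv).matrix_trace
  have hpriorc : Continuous prior :=
    Real.continuous_sqrt.comp ((continuous_pow 2).mul hT)
  refine ⟨hpriorc.continuousOn, ?_, ?_⟩
  · have h0 : prior 0 = 0 := by
      simp [prior]
    have := hpriorc.tendsto 0
    rw [h0] at this
    exact this.mono_left nhdsWithin_le_nhds
  · -- asymptotics at infinity
    set B : ℝ → Matrix (Fin n) (Fin n) ℝ := fun s => s • U + 1 with hBdef
    set g : ℝ → ℝ := fun s => ((B s)⁻¹ * (B s)⁻¹).trace with hgdef
    have hBcont : Continuous B := (continuous_id.smul continuous_const).add continuous_const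
    have hgat : ContinuousAt g 0 := by
      have hdet0 : ((B 0).det)⁻¹ ≠ 0 := by simp [hBdef]
      have h1 : ContinuousAt (fun s => ((B s).det)⁻¹) 0 :=
        (hBcont.matrix_det.continuousAt).inv₀ (by simp [hBdef])
      have h2 : ContinuousAt (fun s => ((B s).det)⁻¹ • (B s).adjugate) 0 :=
        h1.smul hBcont.matrix_adjugate.continuousAt
      have h3 : ContinuousAt (fun s => (B s)⁻¹) 0 := by
        convert h2 using 1
        funext s
        rw [Matrix.inv_def, Ring.inverse_eq_inv]
      have h4 : ContinuousAt (fun X : Matrix (Fin n) (Fin n) ℝ => X.trace)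
          ((fun s => (B s)⁻¹ * (B s)⁻¹) 0) := (Continuous.matrix_trace continuous_id).continuousAt
      exact ContinuousAt.comp (f := fun s => (B s)⁻¹ * (B s)⁻¹) h4 (h3.mul h3)
    have hg0 : g 0 = n := by
      have hB0 : B 0 = 1 := by
        rw [hBdef]
        simp
      show ((B 0)⁻¹ * (B 0)⁻¹).trace = n
      rw [hB0, inv_one, one_mul, Matrix.trace_one]
      simp
    have hlim : Tendsto (fun τ : ℝ => (τ ^ 2)⁻¹) atTop (nhds 0) :=
      (tendsto_pow_atTop two_ne_zero).inv_tendsto_atTop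
    have hglim : Tendsto (fun τ : ℝ => g ((τ ^ 2)⁻¹)) atTop (nhds (n : ℝ)) := by
      have := hgat.tendsto.comp hlim
      rwa [hg0] at this
    have hsqrtlim : Tendsto (fun τ : ℝ => Real.sqrt (g ((τ ^ 2)⁻¹))) atTop
        (nhds (Real.sqrt n)) :=
      (Real.continuous_sqrt.continuousAt.tendsto.comp hglim)
    refine hsqrtlim.congr' ?_
    filter_upwards [eventually_gt_atTop (0 : ℝ)] with τ hτ
    have h2 : (τ : ℝ) ^ 2 ≠ 0 := pow_ne_zero 2 hτ.ne'
    have hsc : A τ = τ ^ 2 • B ((τ ^ 2)⁻¹) := by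
      simp [hAdef, hBdef, smul_add, smul_smul, mul_inv_cancel₀ h2]
    have hBdet : IsUnit (B ((τ ^ 2)⁻¹)).det :=
      (aux_pd' U hU (by positivity)).det_pos.ne'.isUnit
    have hinv : (A τ)⁻¹ = (τ ^ 2)⁻¹ • (B ((τ ^ 2)⁻¹))⁻¹ := by
      rw [hsc]
      apply Matrix.inv_eq_left_inv
      rw [Matrix.smul_mul, Matrix.mul_smul, smul_smul, inv_mul_cancel₀ h2, one_smul,
        Matrix.nonsing_inv_mul _ hBdet]
    have htr : ((A τ)⁻¹ * (A τ)⁻¹).trace = (τ ^ 2)⁻¹ * ((τ ^ 2)⁻¹ * g ((τ ^ 2)⁻¹)) := by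
      rw [hinv, Matrix.smul_mul, Matrix.mul_smul, Matrix.trace_smul, Matrix.trace_smul,
        smul_eq_mul, smul_eq_mul]
    show Real.sqrt (g ((τ ^ 2)⁻¹)) = τ * prior τ
    have : prior τ = Real.sqrt (τ ^ 2 * ((A τ)⁻¹ * (A τ)⁻¹).trace) := rfl
    rw [this, htr, ← Real.sqrt_sq hτ.le, ← Real.sqrt_mul (sq_nonneg τ)]
    congr 1
    field_simp
    rw [Real.sq_sqrt (sq_nonneg τ)]
end

section
/- For n ≥ 2, U symmetric positive definite n×n, and any x ∈ R^n, the random effects marginal density m(x) = ∫₀^∞ (2π)^{-(n-1)/2} det(U+τ²I)^{-1/2} (1ᵀ(U+τ²I)⁻¹1)^{-1/2} exp(-xᵀQ(τ²)x/2)·π(τ) dτ with π(τ) = √(τ²tr((U+τ²I)⁻²)) is finite (the integral converges). -/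
open Matrix Real MeasureTheory

private lemma aux_psd_cs {n : ℕ} {B : Matrix (Fin n) (Fin n) ℝ} (hB : B.PosSemidef)
    (x y : Fin n → ℝ) : (x ⬝ᵥ B *ᵥ y) ^ 2 ≤ (x ⬝ᵥ B *ᵥ x) * (y ⬝ᵥ B *ᵥ y) := by
  obtain ⟨C, rfl⟩ : ∃ C : Matrix (Fin n) (Fin n) ℝ, B = Cᴴ * C := by
    open scoped MatrixOrder in
    obtain ⟨C, hC⟩ := CStarAlgebra.nonneg_iff_eq_star_mul_self.mp hB.nonneg
    exact ⟨C, hC⟩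
  have h : ∀ u v : Fin n → ℝ, u ⬝ᵥ (Cᴴ * C) *ᵥ v = (C *ᵥ u) ⬝ᵥ (C *ᵥ v) := by
    intro u v
    rw [← Matrix.mulVec_mulVec, dotProduct_mulVec]
    congr 1
    ext j
    simp [Matrix.vecMul, Matrix.mulVec, dotProduct, Matrix.conjTranspose_apply,
      mul_comm]
  rw [h, h, h]
  simpa [dotProduct, pow_two] using
    Finset.sum_mul_sq_le_sq_mul_sq Finset.univ (C *ᵥ x) (C *ᵥ y)

private lemma aux_dot_cs {n : ℕ} (x y : Fin n → ℝ) :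
    (x ⬝ᵥ y) ^ 2 ≤ (x ⬝ᵥ x) * (y ⬝ᵥ y) := by
  simpa [dotProduct, pow_two] using Finset.sum_mul_sq_le_sq_mul_sq Finset.univ x y

private lemma aux_dot_self_nonneg {n : ℕ} (x : Fin n → ℝ) : 0 ≤ x ⬝ᵥ x :=
  Finset.sum_nonneg fun i _ => mul_self_nonneg _

private lemma aux_rpow_neg_half {a : ℝ} (ha : 0 < a) :
    a ^ (-(1 : ℝ) / 2) = (Real.sqrt a)⁻¹ := by
  rw [neg_div, Real.rpow_neg ha.le, Real.sqrt_eq_rpow]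

private lemma aux_vecMulVec_mulVec {n : ℕ} (a y : Fin n → ℝ) :
    vecMulVec a a *ᵥ y = (a ⬝ᵥ y) • a := by
  ext j
  simp only [Matrix.mulVec, Matrix.vecMulVec_apply, dotProduct, Pi.smul_apply,
    smul_eq_mul]
  rw [Finset.sum_mul]
  exact Finset.sum_congr rfl fun k _ => by ring

private lemma aux_sqrt_add_le (u v : ℝ) (hu : 0 ≤ u) (hv : 0 ≤ v) :
    Real.sqrt (u + v) ≤ Real.sqrt u + Real.sqrt v := by
  have h : u + v ≤ (Real.sqrt u + Real.sqrt v) ^ 2 := by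
    nlinarith [Real.sq_sqrt hu, Real.sq_sqrt hv, Real.sqrt_nonneg u, Real.sqrt_nonneg v,
      mul_nonneg (Real.sqrt_nonneg u) (Real.sqrt_nonneg v)]
  calc Real.sqrt (u + v) ≤ Real.sqrt ((Real.sqrt u + Real.sqrt v) ^ 2) := Real.sqrt_le_sqrt h
    _ = Real.sqrt u + Real.sqrt v := Real.sqrt_sq (by positivity)

set_option maxHeartbeats 2000000 in
theorem stmt14 {n : ℕ} (hn : 2 ≤ n) (U : Matrix (Fin n) (Fin n) ℝ) (hU : U.PosDef)
    (x : Fin n → ℝ) :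
    let o : Fin n → ℝ := fun _ => 1
    let V : ℝ → Matrix (Fin n) (Fin n) ℝ := fun τ => U + τ ^ 2 • (1 : Matrix (Fin n) (Fin n) ℝ)
    let Q : ℝ → Matrix (Fin n) (Fin n) ℝ := fun τ =>
      (V τ)⁻¹ - (o ⬝ᵥ ((V τ)⁻¹ *ᵥ o))⁻¹ • vecMulVec ((V τ)⁻¹ *ᵥ o) ((V τ)⁻¹ *ᵥ o)
    let prior : ℝ → ℝ := fun τ => Real.sqrt (τ ^ 2 * ((V τ)⁻¹ * (V τ)⁻¹).trace)
    IntegrableOn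
      (fun τ =>
        (2 * π) ^ (-((n : ℝ) - 1) / 2) * (V τ).det ^ (-(1 : ℝ) / 2) *
          (o ⬝ᵥ ((V τ)⁻¹ *ᵥ o)) ^ (-(1 : ℝ) / 2) *
          Real.exp (-(x ⬝ᵥ (Q τ *ᵥ x)) / 2) * prior τ)
      (Set.Ioi (0 : ℝ)) := by
  intro o V Q prior
  have hne : Nonempty (Fin n) := ⟨⟨0, by omega⟩⟩
  have hnpos : (0 : ℝ) < n := by
    have : 0 < n := by omega
    exact_mod_cast this
  have hoi : ∀ i, o i = 1 := fun i => rfl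
  have hVdef : ∀ τ : ℝ, V τ = U + τ ^ 2 • (1 : Matrix (Fin n) (Fin n) ℝ) := fun τ => rfl
  have hQdef : ∀ τ : ℝ, Q τ
      = (V τ)⁻¹ - (o ⬝ᵥ ((V τ)⁻¹ *ᵥ o))⁻¹ • vecMulVec ((V τ)⁻¹ *ᵥ o) ((V τ)⁻¹ *ᵥ o) :=
    fun τ => rfl
  have hpriordef : ∀ τ : ℝ, prior τ = Real.sqrt (τ ^ 2 * ((V τ)⁻¹ * (V τ)⁻¹).trace) :=
    fun τ => rfl
  -- spectral setup
  set ev := hU.1.eigenvalues with hev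
  set c := Finset.univ.inf' (Finset.univ_nonempty) ev with hc
  have hcle : ∀ i, c ≤ ev i := fun i => Finset.inf'_le _ (Finset.mem_univ i)
  have hcpos : 0 < c := by
    obtain ⟨i, -, hi⟩ := Finset.exists_mem_eq_inf' (Finset.univ_nonempty) ev
    rw [hc, hi]; exact hU.eigenvalues_pos i
  set W : Matrix (Fin n) (Fin n) ℝ := (hU.1.eigenvectorUnitary : Matrix (Fin n) (Fin n) ℝ) with hW
  have hWW : W * Wᴴ = 1 := by
    have := Matrix.mem_unitaryGroup_iff.mp hU.1.eigenvectorUnitary.2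
    simpa [Matrix.star_eq_conjTranspose] using this
  have hspec : ∀ τ : ℝ, V τ = W * diagonal (fun i => ev i + τ ^ 2) * Wᴴ := by
    intro τ
    have h1 : U = W * diagonal (RCLike.ofReal ∘ ev) * Wᴴ := hU.1.spectral_theorem
    have h2 : (RCLike.ofReal ∘ ev : Fin n → ℝ) = ev := by ext i; simp
    have h3 : (τ ^ 2 • (1 : Matrix (Fin n) (Fin n) ℝ)) = W * (τ ^ 2 • 1) * Wᴴ := by
      rw [Matrix.mul_smul, Matrix.smul_mul, mul_one, hWW]
    rw [hVdef]
    calc U + τ ^ 2 • (1 : Matrix (Fin n) (Fin n) ℝ)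
        = W * diagonal ev * Wᴴ + W * (τ ^ 2 • 1) * Wᴴ := by rw [← h3, h1, h2]
      _ = W * (diagonal ev + τ ^ 2 • 1) * Wᴴ := by rw [← Matrix.add_mul, ← Matrix.mul_add]
      _ = W * diagonal (fun i => ev i + τ ^ 2) * Wᴴ := by
          rw [Matrix.smul_one_eq_diagonal, Matrix.diagonal_add]
  have hdet_formula : ∀ τ : ℝ, (V τ).det = ∏ i, (ev i + τ ^ 2) := by
    intro τ
    have h5 : W.det * Wᴴ.det = 1 := by rw [← Matrix.det_mul, hWW, Matrix.det_one]
    rw [hspec τ, Matrix.det_mul, Matrix.det_mul]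
    calc W.det * (diagonal fun i => ev i + τ ^ 2).det * Wᴴ.det
        = (W.det * Wᴴ.det) * (diagonal fun i => ev i + τ ^ 2).det := by ring
      _ = ∏ i, (ev i + τ ^ 2) := by rw [h5, one_mul, Matrix.det_diagonal]
  have hUq : ∀ z : Fin n → ℝ, c * (z ⬝ᵥ z) ≤ z ⬝ᵥ U *ᵥ z := by
    have hpsd : (U - c • (1 : Matrix (Fin n) (Fin n) ℝ)).PosSemidef := by
      have h4 : U - c • (1 : Matrix (Fin n) (Fin n) ℝ)
          = W * diagonal (fun i => ev i - c) * Wᴴ := by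
        have h1 : U = W * diagonal (RCLike.ofReal ∘ ev) * Wᴴ := hU.1.spectral_theorem
        have h2 : (RCLike.ofReal ∘ ev : Fin n → ℝ) = ev := by ext i; simp
        have h3 : (c • (1 : Matrix (Fin n) (Fin n) ℝ)) = W * (c • 1) * Wᴴ := by
          rw [Matrix.mul_smul, Matrix.smul_mul, mul_one, hWW]
        calc U - c • (1 : Matrix (Fin n) (Fin n) ℝ)
            = W * diagonal ev * Wᴴ - W * (c • 1) * Wᴴ := by rw [← h3, h1, h2]
          _ = W * (diagonal ev - c • 1) * Wᴴ := by rw [← Matrix.sub_mul, ← Matrix.mul_sub]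
          _ = _ := by rw [Matrix.smul_one_eq_diagonal, Matrix.diagonal_sub]
      rw [h4]
      exact (Matrix.posSemidef_diagonal_iff.mpr
        (fun i => sub_nonneg.mpr (hcle i))).mul_mul_conjTranspose_same W
    intro z
    have := hpsd.dotProduct_mulVec_nonneg z
    simp only [Matrix.sub_mulVec, dotProduct_sub, Matrix.smul_mulVec,
      Matrix.one_mulVec, dotProduct_smul, star_trivial, smul_eq_mul] at this
    linarith
  have hdpos : ∀ τ : ℝ, 0 < c + τ ^ 2 := fun τ => by positivity
  have hVpd : ∀ τ : ℝ, (V τ).PosDef := by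
    intro τ
    rw [hVdef, show τ ^ 2 • (1 : Matrix (Fin n) (Fin n) ℝ) = diagonal (fun _ => τ ^ 2) from
      Matrix.smul_one_eq_diagonal _]
    exact hU.add_posSemidef (Matrix.posSemidef_diagonal_iff.mpr fun i => sq_nonneg τ)
  have hVq : ∀ (τ : ℝ) (z : Fin n → ℝ), (c + τ ^ 2) * (z ⬝ᵥ z) ≤ z ⬝ᵥ V τ *ᵥ z := by
    intro τ z
    rw [hVdef, Matrix.add_mulVec, dotProduct_add, Matrix.smul_mulVec,
      Matrix.one_mulVec, dotProduct_smul, smul_eq_mul]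
    nlinarith [hUq z]
  have hdet_ge : ∀ τ : ℝ, (c + τ ^ 2) ^ 2 * c ^ (n - 2) ≤ (V τ).det := by
    intro τ
    rw [hdet_formula τ]
    have h2 : (c + τ ^ 2) ^ n ≤ ∏ i, (ev i + τ ^ 2) := by
      have := Finset.prod_le_prod (s := Finset.univ) (f := fun _ : Fin n => c + τ ^ 2)
        (g := fun i => ev i + τ ^ 2) (fun i _ => (hdpos τ).le)
        (fun i _ => by have h := hcle i; nlinarith [sq_nonneg τ])
      simpa using this
    calc (c + τ ^ 2) ^ 2 * c ^ (n - 2) ≤ (c + τ ^ 2) ^ 2 * (c + τ ^ 2) ^ (n - 2) := by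
          have hle : c ≤ c + τ ^ 2 := by nlinarith [sq_nonneg τ]
          exact mul_le_mul_of_nonneg_left (pow_le_pow_left₀ hcpos.le hle _) (by positivity)
      _ = (c + τ ^ 2) ^ n := by rw [← pow_add]; congr 1; omega
      _ ≤ _ := h2
  have hVdetpos : ∀ τ : ℝ, 0 < (V τ).det := fun τ => (hVpd τ).det_pos
  have hMinv : ∀ τ : ℝ, V τ * (V τ)⁻¹ = 1 := fun τ =>
    Matrix.mul_nonsing_inv (V τ) (isUnit_iff_ne_zero.mpr (hVdetpos τ).ne')
  have hIpd : ∀ τ : ℝ, ((V τ)⁻¹).PosDef := fun τ => (hVpd τ).inv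
  have ho_ne : o ≠ 0 := by
    intro h
    have h0 := congr_fun h (⟨0, by omega⟩ : Fin n)
    rw [hoi (⟨0, by omega⟩ : Fin n)] at h0
    exact one_ne_zero h0
  have hb : 0 < o ⬝ᵥ U *ᵥ o := by
    have := hU.dotProduct_mulVec_pos ho_ne
    simpa using this
  set b := o ⬝ᵥ U *ᵥ o with hbdef
  have hoo : o ⬝ᵥ o = (n : ℝ) := by
    show (∑ i : Fin n, o i * o i) = (n : ℝ)
    rw [Finset.sum_congr rfl fun i _ => by rw [hoi i, one_mul]]
    simp
  have hs_pos : ∀ τ : ℝ, 0 < o ⬝ᵥ (V τ)⁻¹ *ᵥ o := by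
    intro τ
    have := (hIpd τ).dotProduct_mulVec_pos ho_ne
    simpa using this
  have hbn : ∀ τ : ℝ, (0:ℝ) < b + n * τ ^ 2 := fun τ => by positivity
  have hs_lower : ∀ τ : ℝ, (n : ℝ) ^ 2 / (b + n * τ ^ 2) ≤ o ⬝ᵥ (V τ)⁻¹ *ᵥ o := by
    intro τ
    set w := (V τ)⁻¹ *ᵥ o with hw
    have hVw : V τ *ᵥ w = o := by
      rw [hw, Matrix.mulVec_mulVec, hMinv τ, Matrix.one_mulVec]
    have hcs := aux_psd_cs (hVpd τ).posSemidef o w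
    rw [hVw] at hcs
    rw [hoo, dotProduct_comm w o] at hcs
    have hoVo : o ⬝ᵥ V τ *ᵥ o = b + τ ^ 2 * n := by
      rw [hVdef, Matrix.add_mulVec, dotProduct_add, Matrix.smul_mulVec,
        Matrix.one_mulVec, dotProduct_smul, smul_eq_mul, hoo, hbdef]
    rw [hoVo] at hcs
    rw [div_le_iff₀ (hbn τ)]
    nlinarith [hcs]
  have hinv_norm : ∀ (τ : ℝ) (y : Fin n → ℝ),
      ((V τ)⁻¹ *ᵥ y) ⬝ᵥ ((V τ)⁻¹ *ᵥ y) ≤ (y ⬝ᵥ y) / (c + τ ^ 2) ^ 2 := by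
    intro τ y
    set z := (V τ)⁻¹ *ᵥ y with hz
    have hVz : V τ *ᵥ z = y := by
      rw [hz, Matrix.mulVec_mulVec, hMinv τ, Matrix.one_mulVec]
    have h1 : (c + τ ^ 2) * (z ⬝ᵥ z) ≤ z ⬝ᵥ y := by
      have := hVq τ z; rwa [hVz] at this
    have h2 : (z ⬝ᵥ y) ^ 2 ≤ (z ⬝ᵥ z) * (y ⬝ᵥ y) := aux_dot_cs z y
    have hzz : 0 ≤ z ⬝ᵥ z := aux_dot_self_nonneg z
    rw [le_div_iff₀ (by positivity)]
    rcases eq_or_lt_of_le hzz with h0 | h0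
    · rw [← h0]
      simpa using aux_dot_self_nonneg y
    · have hzy : 0 ≤ z ⬝ᵥ y := le_trans (by positivity) h1
      have h3 : ((c + τ ^ 2) * (z ⬝ᵥ z)) ^ 2 ≤ (z ⬝ᵥ y) ^ 2 :=
        pow_le_pow_left₀ (by positivity) h1 2
      have h4 : (c + τ ^ 2) ^ 2 * (z ⬝ᵥ z) ^ 2 ≤ (z ⬝ᵥ z) * (y ⬝ᵥ y) := by nlinarith [h3, h2]
      have h5 : (z ⬝ᵥ z) * ((z ⬝ᵥ z) * (c + τ ^ 2) ^ 2) ≤ (z ⬝ᵥ z) * (y ⬝ᵥ y) := by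
        nlinarith [h4]
      exact le_of_mul_le_mul_left h5 h0
  have htrace : ∀ τ : ℝ, ((V τ)⁻¹ * (V τ)⁻¹).trace ≤ n / (c + τ ^ 2) ^ 2 := by
    intro τ
    have hsymm : ∀ i j, (V τ)⁻¹ i j = (V τ)⁻¹ j i := by
      intro i j
      have := (hIpd τ).1
      conv_lhs => rw [← this]
      simp [Matrix.conjTranspose_apply]
    have heach : ∀ i : Fin n, ((V τ)⁻¹ * (V τ)⁻¹) i i ≤ 1 / (c + τ ^ 2) ^ 2 := by
      intro i
      have hrow : ((V τ)⁻¹ * (V τ)⁻¹) i i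
          = ((V τ)⁻¹ *ᵥ Pi.single i 1) ⬝ᵥ ((V τ)⁻¹ *ᵥ Pi.single i 1) := by
        rw [Matrix.mul_apply, dotProduct]
        refine Finset.sum_congr rfl fun j _ => ?_
        rw [Matrix.mulVec_single]
        simp only [Pi.smul_apply, Matrix.col_apply, MulOpposite.op_one, one_smul]
        rw [hsymm i j]
      have := hinv_norm τ (Pi.single i 1)
      have hee : (Pi.single i 1 : Fin n → ℝ) ⬝ᵥ Pi.single i 1 = 1 := by
        simp [dotProduct, Pi.single_apply]
      rw [hee] at this
      rw [hrow]
      exact this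
    calc ((V τ)⁻¹ * (V τ)⁻¹).trace = ∑ i, ((V τ)⁻¹ * (V τ)⁻¹) i i := rfl
      _ ≤ ∑ _i : Fin n, 1 / (c + τ ^ 2) ^ 2 := Finset.sum_le_sum fun i _ => heach i
      _ = n / (c + τ ^ 2) ^ 2 := by
          rw [Finset.sum_const, Finset.card_univ, Fintype.card_fin, nsmul_eq_mul]
          ring
  have hq0 : ∀ τ : ℝ, 0 ≤ x ⬝ᵥ Q τ *ᵥ x := by
    intro τ
    set M := (V τ)⁻¹ with hM
    set a := M *ᵥ o with ha
    set s := o ⬝ᵥ a with hs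
    have hQx : Q τ *ᵥ x = M *ᵥ x - s⁻¹ • ((a ⬝ᵥ x) • a) := by
      rw [hQdef, Matrix.sub_mulVec, Matrix.smul_mulVec, aux_vecMulVec_mulVec]
    have hexp : x ⬝ᵥ Q τ *ᵥ x = x ⬝ᵥ M *ᵥ x - s⁻¹ * ((a ⬝ᵥ x) * (x ⬝ᵥ a)) := by
      rw [hQx, dotProduct_sub, dotProduct_smul, dotProduct_smul,
        smul_eq_mul, smul_eq_mul]
    have hax : a ⬝ᵥ x = x ⬝ᵥ a := dotProduct_comm a x
    have hxa : x ⬝ᵥ a = x ⬝ᵥ M *ᵥ o := by rw [ha]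
    have hcs := aux_psd_cs (hIpd τ).posSemidef x o
    have hsoMo : o ⬝ᵥ M *ᵥ o = s := by rw [hs, ha]
    rw [hsoMo, ← hxa] at hcs
    have hspos : 0 < s := hs_pos τ
    rw [hexp, sub_nonneg, hax]
    rw [← pow_two]
    rw [inv_mul_le_iff₀ hspos]
    exact hcs.trans (by rw [mul_comm])
  -- constants
  set C0 : ℝ := (2 * π) ^ (-((n : ℝ) - 1) / 2) with hC0def
  have hC0 : 0 < C0 := Real.rpow_pos_of_pos (by positivity) _
  set K1 : ℝ := (Real.sqrt (c ^ (n - 2)))⁻¹ with hK1def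
  have hK1 : 0 < K1 := by
    rw [hK1def]
    have h : 0 < c ^ (n - 2) := pow_pos hcpos _
    positivity
  set A : ℝ := C0 * K1 * (Real.sqrt n / n) with hAdef
  have hA : 0 < A :=
    mul_pos (mul_pos hC0 hK1) (div_pos (Real.sqrt_pos.mpr hnpos) hnpos)
  have hmin : 0 < min c 1 := lt_min hcpos one_pos
  set Mc : ℝ := A * (Real.sqrt b / (2 * Real.sqrt c) + Real.sqrt n) * (min c 1)⁻¹ with hMdef
  have hscpos : 0 < Real.sqrt c := Real.sqrt_pos.mpr hcpos
  have hMc : 0 ≤ Mc := by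
    apply mul_nonneg (mul_nonneg hA.le (by positivity)) (inv_nonneg.mpr hmin.le)
  -- pointwise bound
  have hbound : ∀ τ ∈ Set.Ioi (0 : ℝ),
      ‖C0 * (V τ).det ^ (-(1 : ℝ) / 2) * (o ⬝ᵥ ((V τ)⁻¹ *ᵥ o)) ^ (-(1 : ℝ) / 2) *
        Real.exp (-(x ⬝ᵥ (Q τ *ᵥ x)) / 2) * prior τ‖ ≤ Mc * (1 + τ ^ 2)⁻¹ := by
    intro τ hτ
    rw [Set.mem_Ioi] at hτ
    have hspos : 0 < o ⬝ᵥ (V τ)⁻¹ *ᵥ o := hs_pos τ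
    have hd := hdpos τ
    have hDn : (0:ℝ) ≤ (V τ).det ^ (-(1:ℝ)/2) := Real.rpow_nonneg (hVdetpos τ).le _
    have hSn : (0:ℝ) ≤ (o ⬝ᵥ ((V τ)⁻¹ *ᵥ o)) ^ (-(1:ℝ)/2) := Real.rpow_nonneg hspos.le _
    have hPn : 0 ≤ prior τ := by rw [hpriordef]; exact Real.sqrt_nonneg _
    have hEn : 0 < Real.exp (-(x ⬝ᵥ Q τ *ᵥ x) / 2) := Real.exp_pos _
    have hD : (V τ).det ^ (-(1:ℝ)/2) ≤ K1 / (c + τ ^ 2) := by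
      rw [aux_rpow_neg_half (hVdetpos τ)]
      have h1 : (c + τ ^ 2) * Real.sqrt (c ^ (n - 2)) ≤ Real.sqrt ((V τ).det) := by
        have h2 := Real.sqrt_le_sqrt (hdet_ge τ)
        rwa [Real.sqrt_mul (sq_nonneg _), Real.sqrt_sq hd.le] at h2
      have h3 : 0 < (c + τ ^ 2) * Real.sqrt (c ^ (n - 2)) := by
        have h : 0 < c ^ (n - 2) := pow_pos hcpos _
        positivity
      calc (Real.sqrt ((V τ).det))⁻¹ ≤ ((c + τ ^ 2) * Real.sqrt (c ^ (n - 2)))⁻¹ :=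
            inv_anti₀ h3 h1
        _ = K1 / (c + τ ^ 2) := by rw [hK1def, mul_inv]; ring
    have hS : (o ⬝ᵥ ((V τ)⁻¹ *ᵥ o)) ^ (-(1:ℝ)/2)
        ≤ (Real.sqrt b + Real.sqrt n * τ) / n := by
      rw [aux_rpow_neg_half hspos]
      have hbnτ : (0:ℝ) < b + n * τ ^ 2 := hbn τ
      have h1 : (n : ℝ) / Real.sqrt (b + n * τ ^ 2) ≤ Real.sqrt (o ⬝ᵥ (V τ)⁻¹ *ᵥ o) := by
        have h2 := Real.sqrt_le_sqrt (hs_lower τ)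
        rwa [Real.sqrt_div (sq_nonneg _), Real.sqrt_sq hnpos.le] at h2
      have h3 : (0:ℝ) < (n : ℝ) / Real.sqrt (b + n * τ ^ 2) := by positivity
      have h4 : (Real.sqrt (o ⬝ᵥ (V τ)⁻¹ *ᵥ o))⁻¹ ≤ Real.sqrt (b + n * τ ^ 2) / n := by
        calc (Real.sqrt (o ⬝ᵥ (V τ)⁻¹ *ᵥ o))⁻¹
            ≤ ((n : ℝ) / Real.sqrt (b + n * τ ^ 2))⁻¹ := inv_anti₀ h3 h1
          _ = Real.sqrt (b + n * τ ^ 2) / n := by rw [inv_div]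
      refine h4.trans ?_
      have h5 : Real.sqrt (b + n * τ ^ 2) ≤ Real.sqrt b + Real.sqrt n * τ := by
        have h6 := aux_sqrt_add_le b ((n : ℝ) * τ ^ 2) hb.le (by positivity)
        have h7 : Real.sqrt ((n : ℝ) * τ ^ 2) = Real.sqrt n * τ := by
          rw [Real.sqrt_mul hnpos.le, Real.sqrt_sq hτ.le]
        rw [h7] at h6
        exact h6
      gcongr
    have hE : Real.exp (-(x ⬝ᵥ Q τ *ᵥ x) / 2) ≤ 1 := by
      rw [Real.exp_le_one_iff]
      have := hq0 τ
      linarith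
    have hP : prior τ ≤ Real.sqrt n * τ / (c + τ ^ 2) := by
      rw [hpriordef]
      have h1 : τ ^ 2 * ((V τ)⁻¹ * (V τ)⁻¹).trace ≤ τ ^ 2 * ((n : ℝ) / (c + τ ^ 2) ^ 2) :=
        mul_le_mul_of_nonneg_left (htrace τ) (sq_nonneg τ)
      refine (Real.sqrt_le_sqrt h1).trans (le_of_eq ?_)
      rw [Real.sqrt_mul (sq_nonneg τ), Real.sqrt_sq hτ.le, Real.sqrt_div hnpos.le,
        Real.sqrt_sq hd.le]
      ring
    have harith1 : Real.sqrt b * τ + Real.sqrt n * τ ^ 2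
        ≤ (Real.sqrt b / (2 * Real.sqrt c) + Real.sqrt n) * (c + τ ^ 2) := by
      have h1 : τ ≤ (c + τ ^ 2) / (2 * Real.sqrt c) := by
        rw [le_div_iff₀ (by positivity)]
        nlinarith [sq_nonneg (Real.sqrt c - τ), Real.sq_sqrt hcpos.le]
      have h2 : τ ^ 2 ≤ c + τ ^ 2 := by nlinarith
      calc Real.sqrt b * τ + Real.sqrt n * τ ^ 2
          ≤ Real.sqrt b * ((c + τ ^ 2) / (2 * Real.sqrt c)) + Real.sqrt n * (c + τ ^ 2) :=
            add_le_add (mul_le_mul_of_nonneg_left h1 (Real.sqrt_nonneg b))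
              (mul_le_mul_of_nonneg_left h2 (Real.sqrt_nonneg _))
        _ = (Real.sqrt b / (2 * Real.sqrt c) + Real.sqrt n) * (c + τ ^ 2) := by ring
    have harith2 : min c 1 * (1 + τ ^ 2) ≤ c + τ ^ 2 := by
      have h1 : min c 1 ≤ c := min_le_left _ _
      have h2 : min c 1 ≤ 1 := min_le_right _ _
      nlinarith [sq_nonneg τ, hmin]
    have hnn1 : (0:ℝ) ≤ C0 * (K1 / (c + τ ^ 2)) := by positivity
    have hnn2 : (0:ℝ) ≤ (Real.sqrt b + Real.sqrt n * τ) / n := by positivity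
    calc ‖C0 * (V τ).det ^ (-(1 : ℝ) / 2) * (o ⬝ᵥ ((V τ)⁻¹ *ᵥ o)) ^ (-(1 : ℝ) / 2) *
        Real.exp (-(x ⬝ᵥ (Q τ *ᵥ x)) / 2) * prior τ‖
        = C0 * (V τ).det ^ (-(1 : ℝ) / 2) * (o ⬝ᵥ ((V τ)⁻¹ *ᵥ o)) ^ (-(1 : ℝ) / 2) *
          Real.exp (-(x ⬝ᵥ (Q τ *ᵥ x)) / 2) * prior τ := by
          rw [Real.norm_eq_abs, abs_of_nonneg]
          exact mul_nonneg (mul_nonneg (mul_nonneg (mul_nonneg hC0.le hDn) hSn) hEn.le) hPn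
      _ ≤ C0 * (K1 / (c + τ ^ 2)) * ((Real.sqrt b + Real.sqrt n * τ) / n) * 1 *
          (Real.sqrt n * τ / (c + τ ^ 2)) := by
          have m1 : C0 * (V τ).det ^ (-(1 : ℝ) / 2) ≤ C0 * (K1 / (c + τ ^ 2)) :=
            mul_le_mul_of_nonneg_left hD hC0.le
          have m2 : C0 * (V τ).det ^ (-(1 : ℝ) / 2) * (o ⬝ᵥ ((V τ)⁻¹ *ᵥ o)) ^ (-(1 : ℝ) / 2)
              ≤ C0 * (K1 / (c + τ ^ 2)) * ((Real.sqrt b + Real.sqrt n * τ) / n) :=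
            mul_le_mul m1 hS hSn hnn1
          have m3 : C0 * (V τ).det ^ (-(1 : ℝ) / 2) * (o ⬝ᵥ ((V τ)⁻¹ *ᵥ o)) ^ (-(1 : ℝ) / 2) *
              Real.exp (-(x ⬝ᵥ (Q τ *ᵥ x)) / 2)
              ≤ C0 * (K1 / (c + τ ^ 2)) * ((Real.sqrt b + Real.sqrt n * τ) / n) * 1 :=
            mul_le_mul m2 hE hEn.le (mul_nonneg hnn1 hnn2)
          exact mul_le_mul m3 hP hPn
            (mul_nonneg (mul_nonneg hnn1 hnn2) zero_le_one)
      _ = A * ((Real.sqrt b * τ + Real.sqrt n * τ ^ 2) / (c + τ ^ 2) ^ 2) := by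
          rw [hAdef]
          field_simp
      _ ≤ A * (((Real.sqrt b / (2 * Real.sqrt c) + Real.sqrt n) * (c + τ ^ 2)) /
            (c + τ ^ 2) ^ 2) := by
          apply mul_le_mul_of_nonneg_left _ hA.le
          gcongr
      _ = A * (Real.sqrt b / (2 * Real.sqrt c) + Real.sqrt n) * (c + τ ^ 2)⁻¹ := by
          field_simp
      _ ≤ A * (Real.sqrt b / (2 * Real.sqrt c) + Real.sqrt n) *
            ((min c 1)⁻¹ * (1 + τ ^ 2)⁻¹) := by
          apply mul_le_mul_of_nonneg_left _ (mul_nonneg hA.le (by positivity))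
          rw [← mul_inv]
          exact inv_anti₀ (by positivity) harith2
      _ = Mc * (1 + τ ^ 2)⁻¹ := by rw [hMdef]; ring
  -- continuity
  have hVeq : V = fun τ : ℝ => U + τ ^ 2 • (1 : Matrix (Fin n) (Fin n) ℝ) := funext hVdef
  have hVcont : Continuous V := by
    rw [hVeq]
    exact continuous_const.add ((continuous_pow 2).smul continuous_const)
  have hdetcont : Continuous fun τ => (V τ).det := hVcont.matrix_det
  have hinvcont : Continuous fun τ => (V τ)⁻¹ := by
    have heq : (fun τ => (V τ)⁻¹) = fun τ => ((V τ).det)⁻¹ • (V τ).adjugate := by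
      funext τ
      rw [Matrix.inv_def, Ring.inverse_eq_inv']
    rw [heq]
    exact (hdetcont.inv₀ fun τ => (hVdetpos τ).ne').smul hVcont.matrix_adjugate
  have hacont : Continuous fun τ => (V τ)⁻¹ *ᵥ o := hinvcont.matrix_mulVec continuous_const
  have hscont : Continuous fun τ => o ⬝ᵥ (V τ)⁻¹ *ᵥ o :=
    continuous_const.dotProduct hacont
  have hQcont : Continuous Q := by
    have hQeq : Q = fun τ => (V τ)⁻¹ -
        (o ⬝ᵥ ((V τ)⁻¹ *ᵥ o))⁻¹ • vecMulVec ((V τ)⁻¹ *ᵥ o) ((V τ)⁻¹ *ᵥ o) := funext hQdef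
    rw [hQeq]
    exact hinvcont.sub ((hscont.inv₀ fun τ => (hs_pos τ).ne').smul
      (hacont.matrix_vecMulVec hacont))
  have hqxcont : Continuous fun τ => x ⬝ᵥ Q τ *ᵥ x :=
    continuous_const.dotProduct (hQcont.matrix_mulVec continuous_const)
  have hpriorcont : Continuous prior := by
    have hpeq : prior = fun τ => Real.sqrt (τ ^ 2 * ((V τ)⁻¹ * (V τ)⁻¹).trace) :=
      funext hpriordef
    rw [hpeq]
    exact Real.continuous_sqrt.comp
      ((continuous_pow 2).mul ((hinvcont.matrix_mul hinvcont).matrix_trace))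
  have hFcont : Continuous fun τ =>
      C0 * (V τ).det ^ (-(1 : ℝ) / 2) * (o ⬝ᵥ ((V τ)⁻¹ *ᵥ o)) ^ (-(1 : ℝ) / 2) *
        Real.exp (-(x ⬝ᵥ (Q τ *ᵥ x)) / 2) * prior τ := by
    refine (((continuous_const.mul ?_).mul ?_).mul ?_).mul hpriorcont
    · exact hdetcont.rpow_const fun τ => Or.inl (hVdetpos τ).ne'
    · exact hscont.rpow_const fun τ => Or.inl (hs_pos τ).ne'
    · exact (hqxcont.neg.div_const 2).rexp
  exact Integrable.mono' ((integrable_inv_one_add_sq.const_mul Mc).integrableOn)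
    hFcont.aestronglyMeasurable
    ((ae_restrict_iff' measurableSet_Ioi).mpr (ae_of_all _ hbound))
end
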